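/- Any configuration on a finite connected graph G without sinks in which every vertex v has at least 2·deg(v) − 1 particles is not stabilizable; in particular, on the torus Z_n^2 any configuration with at least 7 particles on every site never stabilizes. -/

import Mathlib

variable {V : Type*} [Fintype V] [DecidableEq V]

/-- Toppling at vertex `v`: remove `deg v` particles from `v` and send one along
each incident edge. -/
def topple (G : SimpleGraph V) [DecidableRel G.Adj] (c : V → ℕ) (v : V) : V → ℕ :=
  fun w => if w = v then c v - G.degree v else c w + (if G.Adj v w then 1 else 0)

/-- Result of performing the topplings listed in `L`, in order. -/
def runTopplings (G : SimpleGraph V) [DecidableRel G.Adj] (c : V → ℕ) : List V → (V → ℕ)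
  | [] => c
  | v :: L => runTopplings G (topple G c v) L

/-- A sequence of topplings (no sinks) is legal if each toppled vertex is unstable
at the moment it topples. -/
def LegalSeq (G : SimpleGraph V) [DecidableRel G.Adj] : (V → ℕ) → List V → Prop
  | _, [] => True
  | c, v :: L => G.degree v ≤ c v ∧ LegalSeq G (topple G c v) L

/-- A configuration (no sinks) is stable if every vertex has fewer particles than
its degree. -/
def StableConf (G : SimpleGraph V) [DecidableRel G.Adj] (c : V → ℕ) : Prop :=
  ∀ v, c v < G.degree v

/-- A configuration (no sinks) is stabilizable if some finite sequence of legal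
topplings reaches a stable configuration. -/
def Stabilizable (G : SimpleGraph V) [DecidableRel G.Adj] (c : V → ℕ) : Prop :=
  ∃ L : List V, LegalSeq G c L ∧ StableConf G (runTopplings G c L)

/-- The discrete torus Z_n × Z_n: two distinct vertices are adjacent if they differ
by one in exactly one coordinate. -/
def torus (n : ℕ) : SimpleGraph (ZMod n × ZMod n) where
  Adj v w := v ≠ w ∧
    ((v.2 = w.2 ∧ (v.1 = w.1 + 1 ∨ w.1 = v.1 + 1)) ∨
     (v.1 = w.1 ∧ (v.2 = w.2 + 1 ∨ w.2 = v.2 + 1)))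
  symm := by
    constructor
    intro v w h
    exact ⟨h.1.symm, by tauto⟩
  loopless := by
    constructor
    intro v h
    exact h.1 rfl

instance (n : ℕ) : DecidableRel (torus n).Adj := by
  intro v w
  unfold torus
  infer_instance

lemma run_count (G : SimpleGraph V) [DecidableRel G.Adj] :
    ∀ (L : List V) (c : V → ℕ), LegalSeq G c L → ∀ v,
      runTopplings G c L v + L.count v * G.degree v
        = c v + ∑ w, if G.Adj w v then L.count w else 0 := by
  intro L
  induction L with
  | nil => intro c _ v; simp [runTopplings]
  | cons u L ih =>
    intro c hleg v
    obtain ⟨hu, hleg'⟩ := hleg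
    have H := ih (topple G c u) hleg' v
    have hsum : (∑ w, if G.Adj w v then (u :: L).count w else 0)
        = (∑ w, if G.Adj w v then L.count w else 0) + (if G.Adj u v then 1 else 0) := by
      have : ∀ w : V, (if G.Adj w v then (u :: L).count w else 0)
          = (if G.Adj w v then L.count w else 0)
            + (if w = u then (if G.Adj w v then 1 else 0) else 0) := by
        intro w
        rcases eq_or_ne w u with rfl | hw
        · by_cases hadj : G.Adj w v <;> simp [hadj, List.count_cons]
        · by_cases hadj : G.Adj w v <;> simp [hadj, hw, Ne.symm hw, List.count_cons]
      rw [Finset.sum_congr rfl fun w _ => this w, Finset.sum_add_distrib,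
        Finset.sum_ite_eq' Finset.univ u (fun w => if G.Adj w v then 1 else 0)]
      simp
    simp only [runTopplings]
    by_cases hv : v = u
    · subst hv
      have hloop : ¬ G.Adj v v := G.loopless.irrefl v
      rw [List.count_cons_self, hsum, if_neg hloop, add_one_mul]
      simp only [topple] at H
      rw [if_true] at H
      have := Nat.sub_add_cancel hu
      omega
    · rw [show (u :: L).count v = L.count v by
        simp [List.count_cons, hv, Ne.symm hv], hsum]
      simp only [topple, if_neg hv] at H
      by_cases hadj : G.Adj u v <;>
        simp only [hadj, if_true, if_false, G.adj_comm u v] at H ⊢ <;> omega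

lemma not_stab_aux (G : SimpleGraph V) [DecidableRel G.Adj] [Nonempty V]
    (c : V → ℕ) (h : ∀ v, 2 * G.degree v - 1 ≤ c v) : ¬ Stabilizable G c := by
  rintro ⟨L, hleg, hstab⟩
  obtain ⟨v, -, hv⟩ := Finset.exists_min_image Finset.univ (fun v => L.count v)
    ⟨Classical.arbitrary V, Finset.mem_univ _⟩
  have key := run_count G L c hleg v
  have hS : L.count v * G.degree v ≤ ∑ w, if G.Adj w v then L.count w else 0 := by
    have h1 : (∑ w, if G.Adj w v then L.count v else 0)
        ≤ ∑ w, if G.Adj w v then L.count w else 0 := by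
      refine Finset.sum_le_sum fun w _ => ?_
      by_cases hadj : G.Adj w v
      · simpa [hadj] using hv w (Finset.mem_univ w)
      · simp [hadj]
    calc L.count v * G.degree v
        = ∑ w, if G.Adj w v then L.count v else 0 := by
          rw [← Finset.sum_filter]
          rw [Finset.sum_const, smul_eq_mul]
          have : Finset.univ.filter (fun w => G.Adj w v) = G.neighborFinset v := by
            ext w
            simp [SimpleGraph.mem_neighborFinset, G.adj_comm]
          rw [this, ← SimpleGraph.card_neighborFinset_eq_degree, mul_comm]
      _ ≤ _ := h1
  have hstv := hstab v
  have hcv := h v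
  omega

lemma torus_degree_le (n : ℕ) [NeZero n] (v : ZMod n × ZMod n) :
    (torus n).degree v ≤ 4 := by
  have hsub : (torus n).neighborFinset v ⊆
      {(v.1 + 1, v.2), (v.1 - 1, v.2), (v.1, v.2 + 1), (v.1, v.2 - 1)} := by
    intro w hw
    rw [SimpleGraph.mem_neighborFinset] at hw
    obtain ⟨hne, h1 | h2⟩ := hw
    · obtain ⟨he, h3 | h3⟩ := h1
      · have : w.1 = v.1 - 1 := by rw [h3]; ring
        simp only [Finset.mem_insert, Finset.mem_singleton]
        right; left
        exact Prod.ext this he.symm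
      · simp only [Finset.mem_insert, Finset.mem_singleton]
        left
        exact Prod.ext h3 he.symm
    · obtain ⟨he, h3 | h3⟩ := h2
      · have : w.2 = v.2 - 1 := by rw [h3]; ring
        simp only [Finset.mem_insert, Finset.mem_singleton]
        right; right; right
        exact Prod.ext he.symm this
      · simp only [Finset.mem_insert, Finset.mem_singleton]
        right; right; left
        exact Prod.ext he.symm h3
  calc (torus n).degree v = ((torus n).neighborFinset v).card :=
        ((torus n).card_neighborFinset_eq_degree v).symm
    _ ≤ _ := Finset.card_le_card hsub
    _ ≤ 4 := by
        refine le_trans (Finset.card_insert_le _ _) ?_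
        refine Nat.succ_le_succ (le_trans (Finset.card_insert_le _ _) ?_)
        refine Nat.succ_le_succ (le_trans (Finset.card_insert_le _ _) ?_)
        simp

/-- Any configuration on a finite connected graph without sinks in which every vertex
`v` has at least `2·deg v − 1` particles is not stabilizable; in particular, on the
torus `Z_n²` (where every vertex has degree 4) any configuration with at least 7
particles on every site never stabilizes. -/
theorem not_stabilizable_of_large (G : SimpleGraph V) [DecidableRel G.Adj]
    (hconn : G.Connected) (c : V → ℕ) (h : ∀ v, 2 * G.degree v - 1 ≤ c v) :
    ¬ Stabilizable G c ∧
    ∀ (n : ℕ) [NeZero n], 3 ≤ n → ∀ c' : ZMod n × ZMod n → ℕ,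
      (∀ v, 7 ≤ c' v) → ¬ Stabilizable (torus n) c' := by
  haveI : Nonempty V := hconn.nonempty
  refine ⟨not_stab_aux G c h, ?_⟩
  intro n _ hn c' hc'
  exact not_stab_aux (torus n) c' fun v => by
    have h1 := torus_degree_le n v
    have h2 := hc' v
    omega
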